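/- For each 1 ≤ i ≤ n, the unique additive map δ̃_i : A → A determined on the left R-module basis by δ̃_i(r·x_1^{α_1}⋯x_n^{α_n}) = δ_i(r)·x_1^{α_1}⋯x_n^{α_n} for all r ∈ R and α ∈ ℕⁿ is a σ̃_i-derivation of A, i.e., δ̃_i(fg) = σ̃_i(f)·δ̃_i(g) + δ̃_i(f)·g for all f, g ∈ A, where σ̃_i : A → A is the ring automorphism determined by σ̃_i(r·x_1^{α_1}⋯x_n^{α_n}) = σ_i(r)·x_1^{α_1}⋯x_n^{α_n}. -/

import Mathlib

section skew_pbw_aux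

variable {A : Type*} [Ring A]

private lemma aux_ofFn_prod_one {n : ℕ} (f : Fin n → A) (h : ∀ i, f i = 1) :
    (List.ofFn f).prod = 1 := by
  apply List.prod_eq_one
  intro a ha
  rw [List.mem_ofFn] at ha
  obtain ⟨i, rfl⟩ := ha
  exact h i

private lemma aux_ofFn_prod_update {n : ℕ} (f : Fin n → A) (k : Fin n)
    (h : ∀ j, k < j → f j = 1) :
    (List.ofFn f).prod = (List.ofFn (Function.update f k 1)).prod * f k := by
  induction n with
  | zero => exact absurd k.2 (Nat.not_lt_zero _)
  | succ n ih =>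
    rcases Fin.eq_zero_or_eq_succ k with hk | ⟨j, rfl⟩
    · subst hk
      have h1 : ∀ i : Fin n, f i.succ = 1 := fun i => h _ (Fin.succ_pos i)
      have h2 : ∀ i : Fin (n+1), Function.update f 0 1 i = 1 := by
        intro i
        rcases Fin.eq_zero_or_eq_succ i with hi | ⟨m, rfl⟩
        · subst hi; simp
        · rw [Function.update_of_ne (Fin.succ_ne_zero m)]; exact h _ (Fin.succ_pos m)
      rw [List.ofFn_succ, List.prod_cons, aux_ofFn_prod_one _ h1, mul_one,
        aux_ofFn_prod_one _ h2, one_mul]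
    · have hcomp : (fun m : Fin n => Function.update f j.succ 1 m.succ)
          = Function.update (fun m : Fin n => f m.succ) j 1 := by
        funext m
        by_cases hm : m = j
        · subst hm; simp
        · rw [Function.update_of_ne (fun hc => hm (Fin.succ_injective _ hc)),
            Function.update_of_ne hm]
      have ihres := ih (fun m => f m.succ) j (fun m hm => h m.succ (Fin.succ_lt_succ_iff.mpr hm))
      rw [List.ofFn_succ, List.prod_cons, ihres, List.ofFn_succ, List.prod_cons, hcomp,
        Function.update_of_ne (Fin.succ_ne_zero j).symm, mul_assoc]

end skew_pbw_aux

/-- **Statement 8.** Let `A` be a skew PBW extension of `R` in `n` variables of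
automorphism type: `A` contains `R` as a subring (via the injective ring homomorphism
`ι` sharing the identity), `A` is free as a left `R`-module with basis the ordered
monomials `{x^α = x₁^{α₁}⋯xₙ^{αₙ} : α ∈ ℕⁿ}`, for each `i` there are a ring
automorphism `σᵢ` of `R` and a `σᵢ`-derivation `δᵢ` with `xᵢ·r = σᵢ(r)·xᵢ + δᵢ(r)`,
and for all `i, j` there are a nonzero `d_{i,j} ∈ R` and elements
`c_{i,j,0}, …, c_{i,j,n} ∈ R` with
`x_j x_i − d_{i,j}·x_i x_j = c_{i,j,0} + Σ_{k=1}^{n} c_{i,j,k}·x_k`; assume all the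
compatibility conditions listed in the hypotheses (the `σ`'s and `δ`'s commute with
each other, and the `δ`'s kill, and the `σ`'s fix, the structure constants).  Then for
each `i`, the unique additive map `δ̃ᵢ : A → A` determined on the basis by
`δ̃ᵢ(r·x₁^{α₁}⋯xₙ^{αₙ}) = δᵢ(r)·x₁^{α₁}⋯xₙ^{αₙ}` is a `σ̃ᵢ`-derivation of `A`,
i.e. `δ̃ᵢ(fg) = σ̃ᵢ(f)·δ̃ᵢ(g) + δ̃ᵢ(f)·g` for all `f, g ∈ A`, where `σ̃ᵢ` is the ring
automorphism of `A` determined by `σ̃ᵢ(r·x^α) = σᵢ(r)·x^α`. -/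
theorem skew_pbw_n_vars_extended_delta_is_sigma_derivation
    {R A : Type*} [Ring R] [Ring A] (n : ℕ) (ι : R →+* A) (hι : Function.Injective ι)
    (x : Fin n → A) (σ : Fin n → R ≃+* R) (δ : Fin n → R → R)
    (hδadd : ∀ (i : Fin n) (r s : R), δ i (r + s) = δ i r + δ i s)
    (hδmul : ∀ (i : Fin n) (r s : R), δ i (r * s) = σ i r * δ i s + δ i r * s)
    (hcomm : ∀ (i : Fin n) (r : R), x i * ι r = ι (σ i r) * x i + ι (δ i r))
    (d : Fin n → Fin n → R) (hd : ∀ i j, d i j ≠ 0)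
    (c : Fin n → Fin n → Fin (n + 1) → R)
    (hrel : ∀ i j, x j * x i - ι (d i j) * (x i * x j) =
      ι (c i j 0) + ∑ k : Fin n, ι (c i j k.succ) * x k)
    (hσδ : ∀ (i : Fin n) (r : R), σ i (δ i r) = δ i (σ i r))
    (hδδ : ∀ (i j : Fin n) (r : R), δ i (δ j r) = δ j (δ i r))
    (hδσ : ∀ (i j : Fin n) (r : R), δ i (σ j r) = σ j (δ i r))
    (hσσ : ∀ (i j : Fin n) (r : R), σ i (σ j r) = σ j (σ i r))
    (hδd : ∀ k i j, δ k (d i j) = 0)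
    (hδc : ∀ (k i j : Fin n) (l : Fin (n + 1)), δ k (c i j l) = 0)
    (hσd : ∀ k i j, σ k (d i j) = d i j)
    (hσc : ∀ (k i j : Fin n) (l : Fin (n + 1)), σ k (c i j l) = c i j l)
    (hbasis : Function.Bijective fun f : (Fin n → ℕ) →₀ R =>
      f.sum fun α r => ι r * (List.ofFn fun i => x i ^ α i).prod) :
    ∀ i : Fin n, ∃ (σt : A ≃+* A) (δt : A →+ A),
      (∀ (r : R) (α : Fin n → ℕ),
        σt (ι r * (List.ofFn fun i => x i ^ α i).prod) =
          ι (σ i r) * (List.ofFn fun i => x i ^ α i).prod) ∧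
      (∀ (r : R) (α : Fin n → ℕ),
        δt (ι r * (List.ofFn fun i => x i ^ α i).prod) =
          ι (δ i r) * (List.ofFn fun i => x i ^ α i).prod) ∧
      (∀ f g : A, δt (f * g) = σt f * δt g + δt f * g) := by
  intro i
  set mono : (Fin n → ℕ) → A := fun α => (List.ofFn fun i => x i ^ α i).prod with hmono
  -- the basis equivalence
  have Fadd : ∀ f g : (Fin n → ℕ) →₀ R,
      ((f + g).sum fun α r => ι r * mono α) = (f.sum fun α r => ι r * mono α)
        + (g.sum fun α r => ι r * mono α) := by
    intro f g
    apply Finsupp.sum_add_index' (by intro a; simp) (by intro a b₁ b₂; rw [map_add, add_mul])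
  let F : ((Fin n → ℕ) →₀ R) →+ A :=
    AddMonoidHom.mk' (fun f => f.sum fun α r => ι r * mono α) Fadd
  let e : ((Fin n → ℕ) →₀ R) ≃+ A := AddEquiv.ofBijective F hbasis
  have he : ∀ (r : R) (α : Fin n → ℕ), e (Finsupp.single α r) = ι r * mono α := by
    intro r α
    show (Finsupp.single α r).sum (fun α r => ι r * mono α) = _
    rw [Finsupp.sum_single_index (by simp)]
  have ext_basis : ∀ (p : A → Prop), p 0 → (∀ a b, p a → p b → p (a + b)) →
      (∀ (r : R) (α : Fin n → ℕ), p (ι r * mono α)) → ∀ a, p a := by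
    intro p h0 hadd hgen a
    obtain ⟨f, rfl⟩ := e.surjective a
    induction f using Finsupp.induction with
    | zero => simpa using h0
    | single_add α r f _ _ ih => rw [map_add, he]; exact hadd _ _ (hgen r α) ih
  -- the extended maps
  let δhom : R →+ R := AddMonoidHom.mk' (δ i) (hδadd i)
  let δE : A →+ A := (e.toAddMonoidHom.comp (Finsupp.mapRange.addMonoidHom δhom)).comp
    e.symm.toAddMonoidHom
  let σE : A ≃+ A := (e.symm.trans (Finsupp.mapRange.addEquiv (σ i).toAddEquiv)).trans e
  have hδb : ∀ (r : R) (α : Fin n → ℕ), δE (ι r * mono α) = ι (δ i r) * mono α := by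
    intro r α
    show e (Finsupp.mapRange.addMonoidHom δhom (e.symm (ι r * mono α))) = _
    rw [← he r α, AddEquiv.symm_apply_apply, Finsupp.mapRange.addMonoidHom_apply,
      Finsupp.mapRange_single, he]
    rfl
  have hσb : ∀ (r : R) (α : Fin n → ℕ), σE (ι r * mono α) = ι (σ i r) * mono α := by
    intro r α
    show e (Finsupp.mapRange.addEquiv (σ i).toAddEquiv (e.symm (ι r * mono α))) = _
    rw [← he r α, AddEquiv.symm_apply_apply, Finsupp.mapRange.addEquiv_apply,
      Finsupp.mapRange_single, he]
    rfl
  -- basic facts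
  have hδ1 : ∀ k : Fin n, δ k 1 = 0 := by
    intro k
    have h := hδmul k 1 1
    rw [mul_one, map_one, one_mul, mul_one] at h
    have h2 : δ k 1 + δ k 1 = δ k 1 + 0 := by rw [← h, add_zero]
    exact add_left_cancel h2
  have hmono0 : mono 0 = 1 := aux_ofFn_prod_one _ (fun j => pow_zero (x j))
  -- the "constants" predicate
  set Sp : R → Prop := fun s => (∀ k, σ k s = s) ∧ (∀ k, δ k s = 0) with hSp
  have hSp1 : Sp 1 := ⟨fun k => map_one (σ k), hδ1⟩
  have hSpmul : ∀ s t, Sp s → Sp t → Sp (s * t) := by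
    intro s t hs ht
    constructor
    · intro k; rw [map_mul, hs.1 k, ht.1 k]
    · intro k; rw [hδmul k s t, hs.2 k, ht.2 k, mul_zero, zero_mul, add_zero]
  have hSpd : ∀ a b, Sp (d a b) := fun a b => ⟨fun k => hσd k a b, fun k => hδd k a b⟩
  have hSpc : ∀ a b l, Sp (c a b l) := fun a b l => ⟨fun k => hσc k a b l, fun k => hδc k a b l⟩
  -- commuting constants past monomials
  have hxcomm : ∀ s, Sp s → ∀ k, Commute (ι s) (x k) := by
    intro s hs k
    have := hcomm k s
    rw [hs.1 k, hs.2 k, map_zero, add_zero] at this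
    exact (Commute.symm this)
  have hmonocomm : ∀ s, Sp s → ∀ β, Commute (ι s) (mono β) := by
    intro s hs β
    apply Commute.list_prod_right
    intro a ha
    rw [List.mem_ofFn] at ha
    obtain ⟨j, rfl⟩ := ha
    exact (hxcomm s hs j).pow_right _
  -- the filtered additive subgroups of "constant combinations"
  set M : ℕ → AddSubgroup A := fun N =>
    AddSubgroup.closure {a | ∃ s β, Sp s ∧ (∑ j, β j) ≤ N ∧ a = ι s * mono β} with hM
  have hMle : ∀ {N N'}, N ≤ N' → M N ≤ M N' := by
    intro N N' hNN'
    apply AddSubgroup.closure_mono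
    rintro a ⟨s, β, hs, hb, rfl⟩
    exact ⟨s, β, hs, le_trans hb hNN', rfl⟩
  have hMmulS : ∀ s, Sp s → ∀ N m, m ∈ M N → ι s * m ∈ M N := by
    intro s hs N m hm
    refine AddSubgroup.closure_induction ?_ ?_ ?_ ?_ hm
    · rintro a ⟨t, β, ht, hb, rfl⟩
      rw [← mul_assoc, ← map_mul]
      exact AddSubgroup.subset_closure ⟨s * t, β, hSpmul s t hs ht, hb, rfl⟩
    · rw [mul_zero]; exact (M N).zero_mem
    · intro a b _ _ ha hb; rw [mul_add]; exact (M N).add_mem ha hb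
    · intro a _ ha; rw [mul_neg]; exact (M N).neg_mem ha
  -- splitting monomials
  have hsplit : ∀ (β : Fin n → ℕ) (k : Fin n), (∀ j, k < j → β j = 0) →
      mono β = mono (Function.update β k 0) * x k ^ β k := by
    intro β k h
    have h1 : ∀ j, k < j → x j ^ β j = 1 := by intro j hj; rw [h j hj, pow_zero]
    have h2 : Function.update (fun j => x j ^ β j) k 1
        = fun j => x j ^ (Function.update β k 0 j) := by
      funext j
      by_cases hj : j = k
      · subst hj; simp
      · rw [Function.update_of_ne hj, Function.update_of_ne hj]
    have := aux_ofFn_prod_update (fun j => x j ^ β j) k h1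
    rw [h2] at this
    exact this
  have hcaseA : ∀ (β : Fin n → ℕ) (k : Fin n), (∀ j, k < j → β j = 0) →
      mono β * x k = mono (Function.update β k (β k + 1)) := by
    intro β k h
    have h' : ∀ j, k < j → Function.update β k (β k + 1) j = 0 := by
      intro j hj; rw [Function.update_of_ne (Fin.ne_of_gt hj)]; exact h j hj
    rw [hsplit β k h, hsplit (Function.update β k (β k + 1)) k h', Function.update_idem,
      Function.update_self, mul_assoc, ← pow_succ]
  have hcaseB : ∀ (β : Fin n → ℕ) (j : Fin n), (∀ l, j < l → β l = 0) → β j ≠ 0 →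
      mono β = mono (Function.update β j (β j - 1)) * x j := by
    intro β j h hjne
    have h' : ∀ l, j < l → Function.update β j (β j - 1) l = 0 := by
      intro l hl; rw [Function.update_of_ne (Fin.ne_of_gt hl)]; exact h l hl
    rw [hsplit β j h, hsplit (Function.update β j (β j - 1)) j h', Function.update_idem,
      Function.update_self, mul_assoc, ← pow_succ]
    congr 2
    omega
  -- the key membership lemma
  have hmulx : ∀ (μ N : ℕ) (k : Fin n) (β : Fin n → ℕ),
      (n+1)*N + (n - k.val) ≤ μ → (∑ j, β j) ≤ N → mono β * x k ∈ M (N+1) := by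
    intro μ
    induction μ using Nat.strong_induction_on with
    | _ μ IH =>
    intro N k β hμ hβ
    by_cases hA : ∀ j, k < j → β j = 0
    · rw [hcaseA β k hA]
      apply AddSubgroup.subset_closure
      refine ⟨1, _, hSp1, ?_, by rw [map_one, one_mul]⟩
      rw [Finset.sum_update_of_mem (Finset.mem_univ k)]
      have : (∑ j, β j) = β k + ∑ j ∈ Finset.univ \ {k}, β j := by
        rw [← Finset.sum_update_of_mem (Finset.mem_univ k)]
        congr 1
        funext j
        by_cases hj : j = k
        · subst hj; rw [Function.update_self]
        · rw [Function.update_of_ne hj]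
      omega
    · push_neg at hA
      obtain ⟨j0, hj0k, hj0⟩ := hA
      set js := Finset.univ.filter (fun j : Fin n => β j ≠ 0) with hjs
      have hj0mem : j0 ∈ js := by simp [hjs, hj0]
      have hjsne : js.Nonempty := ⟨j0, hj0mem⟩
      set j := js.max' hjsne with hj
      have hjβ : β j ≠ 0 := by
        have := js.max'_mem hjsne
        simp only [hjs, Finset.mem_filter] at this
        exact this.2
      have hkj : k < j := lt_of_lt_of_le hj0k (js.le_max' j0 hj0mem)
      have htrail : ∀ l, j < l → β l = 0 := by
        intro l hl
        by_contra hc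
        exact absurd (js.le_max' l (by simp [hjs, hc])) (not_le.mpr hl)
      set β'' := Function.update β j (β j - 1) with hβ''
      have hmonoeq : mono β = mono β'' * x j := hcaseB β j htrail hjβ
      have hsumβ : (∑ l, β l) = β j + ∑ l ∈ Finset.univ \ {j}, β l := by
        rw [← Finset.sum_update_of_mem (Finset.mem_univ j)]
        congr 1
        funext l
        by_cases hl : l = j
        · subst hl; rw [Function.update_self]
        · rw [Function.update_of_ne hl]
      have hsum'' : (∑ l, β'' l) ≤ N - 1 := by
        rw [hβ'', Finset.sum_update_of_mem (Finset.mem_univ j)]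
        omega
      have hβj1 : 1 ≤ β j := Nat.one_le_iff_ne_zero.mpr hjβ
      have hN1 : 1 ≤ N := by omega
      have hNeq : N - 1 + 1 = N := by omega
      have hmeas : (n+1)*(N-1) + (n+1) = (n+1)*N := by
        conv_rhs => rw [← hNeq]
        rw [Nat.mul_add, mul_one]
      -- first piece : mono β'' * x k ∈ M N
      have hm1 : mono β'' * x k ∈ M N := by
        have := IH ((n+1)*(N-1) + (n - k.val))
          (by have hk : (k : ℕ) ≤ n := le_of_lt k.2; omega)
          (N-1) k β'' le_rfl hsum''
        rwa [hNeq] at this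
      -- multiplying M N by x j on the right lands in M (N+1)
      have hm2 : ∀ m ∈ M N, m * x j ∈ M (N+1) := by
        intro m hm
        refine AddSubgroup.closure_induction ?_ ?_ ?_ ?_ hm
        · rintro a ⟨s, γ, hs, hγ, rfl⟩
          rw [mul_assoc]
          refine hMmulS s hs _ _ ?_
          exact IH ((n+1)*N + (n - j.val))
            (by
              have h1 : n - j.val < n - k.val := by
                have hjn : (j : ℕ) < n := j.2
                omega
              omega)
            N j γ le_rfl hγ
        · rw [zero_mul]; exact (M (N+1)).zero_mem
        · intro a b _ _ ha hb; rw [add_mul]; exact (M (N+1)).add_mem ha hb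
        · intro a _ ha; rw [neg_mul]; exact (M (N+1)).neg_mem ha
      -- the relation
      have hxx : x j * x k = (ι (c k j 0) + ∑ l, ι (c k j l.succ) * x l)
          + ι (d k j) * (x k * x j) := by
        have h := hrel k j
        rw [sub_eq_iff_eq_add] at h
        exact h
      have key : mono β * x k = ι (c k j 0) * mono β''
          + (∑ l, ι (c k j l.succ) * (mono β'' * x l))
          + ι (d k j) * ((mono β'' * x k) * x j) := by
        have hc0 : mono β'' * ι (c k j 0) = ι (c k j 0) * mono β'' :=
          (hmonocomm _ (hSpc k j 0) β'').symm.eq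
        have hcd : mono β'' * ι (d k j) = ι (d k j) * mono β'' :=
          (hmonocomm _ (hSpd k j) β'').symm.eq
        have hcl : ∀ l : Fin n, mono β'' * ι (c k j l.succ) = ι (c k j l.succ) * mono β'' :=
          fun l => (hmonocomm _ (hSpc k j l.succ) β'').symm.eq
        rw [hmonoeq, mul_assoc, hxx, mul_add, mul_add, Finset.mul_sum]
        simp only [← mul_assoc]
        rw [hc0, hcd]
        simp only [hcl]
      rw [key]
      refine (M (N+1)).add_mem ((M (N+1)).add_mem ?_ ?_) ?_
      · exact AddSubgroup.subset_closure ⟨c k j 0, β'', hSpc k j 0, by omega, rfl⟩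
      · apply AddSubgroup.sum_mem
        intro l _
        refine hMmulS _ (hSpc k j l.succ) _ _ (hMle (Nat.le_succ N) ?_)
        have := IH ((n+1)*(N-1) + (n - l.val))
          (by
            have hl : n - l.val ≤ n := Nat.sub_le n l.val
            omega)
          (N-1) l β'' le_rfl hsum''
        rwa [hNeq] at this
      · exact hMmulS _ (hSpd k j) _ _ (hm2 _ hm1)
  -- behaviour of σE, δE on R · M
  have hM1 : ∀ N m, m ∈ M N → ∀ r : R,
      σE (ι r * m) = ι (σ i r) * m ∧ δE (ι r * m) = ι (δ i r) * m := by
    intro N m hm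
    refine AddSubgroup.closure_induction ?_ ?_ ?_ ?_ hm
    · rintro a ⟨s, β, hs, -, rfl⟩ r
      have h1 : σ i (r * s) = σ i r * s := by rw [map_mul, hs.1 i]
      have h2 : δ i (r * s) = δ i r * s := by
        rw [hδmul i r s, hs.2 i, mul_zero, zero_add]
      constructor
      · rw [← mul_assoc, ← map_mul, hσb, h1, map_mul, mul_assoc]
      · rw [← mul_assoc, ← map_mul, hδb, h2, map_mul, mul_assoc]
    · intro r
      rw [mul_zero, map_zero, map_zero, mul_zero, mul_zero]
      exact ⟨rfl, rfl⟩
    · intro a b _ _ ha hb r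
      rw [mul_add, map_add, map_add, (ha r).1, (hb r).1, (ha r).2, (hb r).2, mul_add, mul_add]
      exact ⟨rfl, rfl⟩
    · intro a _ ha r
      rw [mul_neg, map_neg, map_neg, (ha r).1, (ha r).2, mul_neg, mul_neg]
      exact ⟨rfl, rfl⟩
  -- Step 1 : right multiplication by x k
  have hstep1 : ∀ (k : Fin n) (f : A),
      σE (f * x k) = σE f * x k ∧ δE (f * x k) = δE f * x k := by
    intro k
    apply ext_basis (fun f => σE (f * x k) = σE f * x k ∧ δE (f * x k) = δE f * x k)
    · simp
    · intro a b ha hb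
      constructor
      · rw [add_mul, map_add, ha.1, hb.1, map_add, add_mul]
      · rw [add_mul, map_add, ha.2, hb.2, map_add, add_mul]
    · intro r α
      have hmem : mono α * x k ∈ M ((∑ j, α j) + 1) :=
        hmulx ((n+1)*(∑ j, α j) + (n - k.val)) (∑ j, α j) k α le_rfl le_rfl
      have h1 := hM1 _ _ hmem r
      constructor
      · rw [mul_assoc, (h1 ).1, hσb, mul_assoc]
      · rw [mul_assoc, (h1 ).2, hδb, mul_assoc]
  -- monomials lie in the monoid generated by the x's
  have hmonoW : ∀ β, mono β ∈ Submonoid.closure (Set.range x) := by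
    intro β
    apply Submonoid.list_prod_mem
    intro a ha
    rw [List.mem_ofFn] at ha
    obtain ⟨l, rfl⟩ := ha
    exact pow_mem (Submonoid.subset_closure (Set.mem_range_self l)) _
  -- Step 2 : right multiplication by monomials
  have hstep2 : ∀ m ∈ Submonoid.closure (Set.range x), ∀ f : A,
      σE (f * m) = σE f * m ∧ δE (f * m) = δE f * m := by
    intro m hm
    refine Submonoid.closure_induction ?_ ?_ ?_ hm
    · rintro a ⟨k, rfl⟩ f
      exact hstep1 k f
    · intro f; simp
    · intro a b _ _ ha hb f
      constructor
      · rw [← mul_assoc, (hb (f * a)).1, (ha f).1, mul_assoc]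
      · rw [← mul_assoc, (hb (f * a)).2, (ha f).2, mul_assoc]
  -- σE and δE on ι r
  have hσι : ∀ r : R, σE (ι r) = ι (σ i r) := by
    intro r
    have h := hσb r 0
    rwa [hmono0, mul_one, mul_one] at h
  have hδι : ∀ r : R, δE (ι r) = ι (δ i r) := by
    intro r
    have h := hδb r 0
    rwa [hmono0, mul_one, mul_one] at h
  -- Step 3 : the two-sided behaviour on monomials
  have hstep3 : ∀ m ∈ Submonoid.closure (Set.range x), ∀ (r s : R),
      σE (ι r * m * ι s) = ι (σ i r) * m * ι (σ i s) ∧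
      δE (ι r * m * ι s) = ι (σ i r) * m * ι (δ i s) + ι (δ i r) * m * ι s := by
    intro m hm
    refine Submonoid.closure_induction_right ?_ ?_ hm
    · intro r s
      constructor
      · rw [mul_one, ← map_mul, hσι, map_mul, map_mul]
        rw [show ι (σ i r) * 1 * ι (σ i s) = ι (σ i r) * ι (σ i s) by rw [mul_one]]
      · rw [mul_one, ← map_mul, hδι, hδmul i r s, map_add, map_mul, map_mul]
        rw [show ι (σ i r) * 1 * ι (δ i s) = ι (σ i r) * ι (δ i s) by rw [mul_one],
          show ι (δ i r) * 1 * ι s = ι (δ i r) * ι s by rw [mul_one]]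
    · rintro a _ y ⟨k, rfl⟩ ha r s
      have expand : ∀ u v w : A, ∀ t : R, u * (v * x k) * ι t
          = u * v * ι (σ k t) * x k + u * v * ι (δ k t) := by
        intro u v w t
        calc u * (v * x k) * ι t = u * v * (x k * ι t) := by
              simp only [mul_assoc]
          _ = u * v * (ι (σ k t) * x k + ι (δ k t)) := by rw [hcomm k t]
          _ = u * v * ι (σ k t) * x k + u * v * ι (δ k t) := by
              rw [mul_add, ← mul_assoc]
      constructor
      · rw [expand (ι r) a a s, map_add, (hstep1 k (ι r * a * ι (σ k s))).1,
          (ha r (σ k s)).1, (ha r (δ k s)).1, expand (ι (σ i r)) a a (σ i s),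
          hσσ i k s, ← hδσ k i s]
      · rw [expand (ι r) a a s, map_add, (hstep1 k (ι r * a * ι (σ k s))).2,
          (ha r (σ k s)).2, (ha r (δ k s)).2, expand (ι (σ i r)) a a (δ i s),
          expand (ι (δ i r)) a a s, hδσ i k s, hδδ i k s]
        noncomm_ring
  -- Step 4 : multiplicativity and the derivation identity
  have hfinal : ∀ g f : A,
      σE (f * g) = σE f * σE g ∧ δE (f * g) = σE f * δE g + δE f * g := by
    apply ext_basis (fun g => ∀ f, σE (f * g) = σE f * σE g ∧
      δE (f * g) = σE f * δE g + δE f * g)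
    · intro f
      simp
    · intro a b ha hb f
      constructor
      · rw [mul_add, map_add, (ha f).1, (hb f).1, map_add, mul_add]
      · rw [mul_add, map_add, (ha f).2, (hb f).2, map_add, mul_add]
        simp only [mul_add]
        abel
    · intro s γ
      apply ext_basis (fun f => σE (f * (ι s * mono γ)) = σE f * σE (ι s * mono γ) ∧
        δE (f * (ι s * mono γ)) = σE f * δE (ι s * mono γ) + δE f * (ι s * mono γ))
      · simp
      · intro a b ha hb
        constructor
        · rw [add_mul, map_add, ha.1, hb.1, map_add, add_mul]
        · rw [add_mul, map_add, ha.2, hb.2, map_add, add_mul]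
          simp only [map_add, add_mul]
          abel
      · intro r β
        have hassoc : ι r * mono β * (ι s * mono γ) = (ι r * mono β * ι s) * mono γ := by
          simp only [mul_assoc]
        have h2σ := (hstep2 (mono γ) (hmonoW γ) (ι r * mono β * ι s)).1
        have h2δ := (hstep2 (mono γ) (hmonoW γ) (ι r * mono β * ι s)).2
        have h3 := hstep3 (mono β) (hmonoW β) r s
        constructor
        · rw [hassoc, h2σ, h3.1, hσb r β, hσb s γ]
          simp only [mul_assoc]
        · rw [hassoc, h2δ, h3.2, hσb r β, hδb s γ, hδb r β]
          simp only [add_mul, mul_assoc]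
  -- assemble the ring equivalence
  let σt : A ≃+* A := ⟨σE.toEquiv, fun a b => (hfinal b a).1, fun a b => map_add σE a b⟩
  refine ⟨σt, δE, ?_, ?_, ?_⟩
  · intro r α
    show σE _ = _
    exact hσb r α
  · intro r α
    exact hδb r α
  · intro f g
    show δE (f * g) = σE f * δE g + δE f * g
    exact (hfinal g f).2
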